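/- Let A be a finite type, M an additive commutative monoid, and w : A → M. Then there exists m ∈ ℕ such that for all n ≥ m: the group of alternating φ-conservative permutations of (Fin n → A) equals the subgroup of Perm(Fin n → A) generated by the 3-cycles (x y z) of triples of pairwise distinct words x, y, z : Fin n → A that agree on all coordinates outside some m-element subset S of Fin n and satisfy ∑_{i ∈ S} w(x i) = ∑_{i ∈ S} w(y i) = ∑_{i ∈ S} w(z i). -/

import Mathlib

open scoped Classical

/-- The φ-weight of a word `x : Fin n → A` with respect to a symbol weighting
`w : A → M` into an additive commutative monoid. -/
def phiWeight {A M : Type*} [AddCommMonoid M] (w : A → M) {n : ℕ}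
    (x : Fin n → A) : M :=
  ∑ i, w (x i)

/-- A permutation of words is *alternating φ-conservative* if it preserves the φ-weight
of every word and its restriction to each φ-weight class is an even permutation. -/
noncomputable def IsAltPhiConservative {A M : Type*} [Fintype A] [DecidableEq A]
    [AddCommMonoid M] (w : A → M) {n : ℕ} (f : Equiv.Perm (Fin n → A)) : Prop :=
  (∀ x : Fin n → A, phiWeight w (f x) = phiWeight w x) ∧
  ∀ (c : M) (h : ∀ x : Fin n → A, phiWeight w x = c ↔ phiWeight w (f x) = c),
    Equiv.Perm.sign (f.subtypePerm (p := fun x => phiWeight w x = c) (fun x => (h x).symm)) = 1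

set_option maxHeartbeats 1000000

namespace APCproof

open Relation MvPolynomial

set_option linter.unusedSectionVars false
variable {A : Type*} [Fintype A] [DecidableEq A]

/-- One exchange step generated by a finite set of pairs. -/
def FStep (P : Finset ((A →₀ ℕ) × (A →₀ ℕ))) (u v : (A →₀ ℕ)) : Prop :=
  ∃ p ∈ P, ∃ c, (u = p.1 + c ∧ v = p.2 + c) ∨ (u = p.2 + c ∧ v = p.1 + c)

theorem fstep_symm {P : Finset ((A →₀ ℕ) × (A →₀ ℕ))} {u v : (A →₀ ℕ)}
    (h : FStep P u v) : FStep P v u := by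
  obtain ⟨p, hp, c, h | h⟩ := h
  · exact ⟨p, hp, c, Or.inr ⟨h.2, h.1⟩⟩
  · exact ⟨p, hp, c, Or.inl ⟨h.2, h.1⟩⟩

theorem rtg_symm {α : Type*} {r : α → α → Prop} (hs : ∀ a b, r a b → r b a)
    {u v : α} (h : ReflTransGen r u v) : ReflTransGen r v u := by
  induction h with
  | refl => exact .refl
  | tail _ hstep ih => exact .head (hs _ _ hstep) ih

theorem eqvGen_to_rtg {α : Type*} {r : α → α → Prop} (hs : ∀ a b, r a b → r b a)
    {u v : α} (h : Relation.EqvGen r u v) : ReflTransGen r u v := by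
  induction h with
  | rel a b hab => exact .single hab
  | refl => exact .refl
  | symm a b _ ih => exact rtg_symm hs ih
  | trans a b c _ _ ih1 ih2 => exact ih1.trans ih2

/-- Rédei-type theorem: the kernel congruence of an additive map out of `A →₀ ℕ`
is generated by finitely many exchange pairs. -/
theorem redei_finsupp {N : Type*} [AddCommMonoid N] (f : (A →₀ ℕ) →+ N) :
    ∃ P : Finset ((A →₀ ℕ) × (A →₀ ℕ)),
      (∀ p ∈ P, f p.1 = f p.2) ∧
      ∀ u v, f u = f v → Relation.ReflTransGen (FStep P) u v := by
  set X : (A →₀ ℕ) → MvPolynomial A ℚ := fun u => monomial u (1 : ℚ) with hX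
  set G : Set (MvPolynomial A ℚ) := {q | ∃ u v, f u = f v ∧ q = X u - X v} with hG
  set I : Ideal (MvPolynomial A ℚ) := Ideal.span G with hI
  have hfg : I.FG := IsNoetherian.noetherian I
  obtain ⟨F, hF⟩ := hfg
  -- find a finite subset T of G spanning I
  have hsub : ∀ g ∈ F, ∃ T : Finset (MvPolynomial A ℚ),
      ↑T ⊆ G ∧ g ∈ Ideal.span (T : Set (MvPolynomial A ℚ)) := by
    intro g hg
    have : g ∈ Ideal.span G := by
      rw [← hI, ← hF]; exact Ideal.subset_span hg
    exact Submodule.mem_span_finite_of_mem_span this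
  choose T hTG hTmem using hsub
  set Tall : Finset (MvPolynomial A ℚ) := F.attach.biUnion (fun g => T g g.2) with hTall
  have hTallG : (Tall : Set (MvPolynomial A ℚ)) ⊆ G := by
    intro q hq
    simp only [hTall, Finset.coe_biUnion, Set.mem_iUnion, Finset.mem_coe,
      Finset.mem_attach, Set.iUnion_true] at hq
    obtain ⟨g, hg⟩ := hq
    exact hTG g g.2 hg
  have hspan : I ≤ Ideal.span (Tall : Set (MvPolynomial A ℚ)) := by
    rw [← hF, Ideal.span_le]
    intro g hg
    have : g ∈ Ideal.span ((T g hg : Finset _) : Set _) := hTmem g hg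
    refine SetLike.le_def.mp (Ideal.span_mono ?_) this
    intro q hq
    exact Finset.mem_coe.mpr (Finset.mem_biUnion.mpr ⟨⟨g, hg⟩, Finset.mem_attach _ _, hq⟩)
  -- extract pairs
  have hpairs : ∀ q : {q // q ∈ Tall}, ∃ uv : (A →₀ ℕ) × (A →₀ ℕ),
      f uv.1 = f uv.2 ∧ (q : MvPolynomial A ℚ) = X uv.1 - X uv.2 := by
    intro q
    obtain ⟨u, v, h1, h2⟩ := hTallG q.2
    exact ⟨(u, v), h1, h2⟩
  choose uv huv1 huv2 using hpairs
  set P : Finset ((A →₀ ℕ) × (A →₀ ℕ)) := Tall.attach.image uv with hP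
  refine ⟨P, ?_, ?_⟩
  · intro p hp
    simp only [hP, Finset.mem_image, Finset.mem_attach, true_and] at hp
    obtain ⟨q, hq⟩ := hp
    rw [← hq]; exact huv1 q
  · intro u v huvf
    -- the linear evaluation map
    set π : (A →₀ ℕ) → Quot (FStep P) := Quot.mk _ with hπ
    set L : MvPolynomial A ℚ →+ (Quot (FStep P) →₀ ℚ) :=
      ((Finsupp.mapDomain.addMonoidHom π : ((A →₀ ℕ) →₀ ℚ) →+ _).comp AddMonoidAlgebra.coeffAddEquiv.toAddMonoidHom) with hL
    have hLmon : ∀ (d : A →₀ ℕ) (c : ℚ), L (monomial d c) = Finsupp.single (π d) c := by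
      intro d c
      rw [← MvPolynomial.single_eq_monomial]
      exact Finsupp.mapDomain_single
    have hker : ∀ x ∈ Ideal.span (Tall : Set (MvPolynomial A ℚ)),
        ∀ r : MvPolynomial A ℚ, L (r * x) = 0 := by
      intro x hx
      refine Submodule.span_induction ?_ ?_ ?_ ?_ hx
      · intro q hq r
        have hqT : q ∈ Tall := hq
        have h2 : q = X (uv ⟨q, hqT⟩).1 - X (uv ⟨q, hqT⟩).2 := huv2 ⟨q, hqT⟩
        have h1 := huv1 ⟨q, hqT⟩
        set s := (uv ⟨q, hqT⟩).1
        set t := (uv ⟨q, hqT⟩).2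
        have hPst : (s, t) ∈ P := by
          simp only [hP, Finset.mem_image]
          exact ⟨⟨q, hqT⟩, Finset.mem_attach _ _, rfl⟩
        induction r using MvPolynomial.induction_on' with
        | monomial d c =>
          rw [h2, hX]
          simp only [mul_sub, monomial_mul, mul_one]
          rw [map_sub, hLmon, hLmon]
          have : π (d + s) = π (d + t) := by
            apply Quot.sound
            exact ⟨(s, t), hPst, d, Or.inl ⟨by rw [add_comm], by rw [add_comm]⟩⟩
          rw [this, sub_self]
        | add p q' ihp ihq => rw [add_mul, map_add, ihp, ihq, add_zero]
      · intro r; rw [mul_zero, map_zero]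
      · intro a b _ _ iha ihb r
        rw [mul_add, map_add, iha r, ihb r, add_zero]
      · intro a b _ ihb r
        rw [smul_eq_mul, ← mul_assoc]
        exact ihb (r * a)
    have hmem : X u - X v ∈ Ideal.span (Tall : Set (MvPolynomial A ℚ)) := by
      apply hspan
      rw [hI]
      exact Ideal.subset_span ⟨u, v, huvf, rfl⟩
    have := hker _ hmem 1
    rw [one_mul, hX, map_sub, hLmon, hLmon, sub_eq_zero] at this
    have hquot : π u = π v := by
      rcases (Finsupp.single_eq_single_iff _ _ _ _).mp this with ⟨h, _⟩ | ⟨h, _⟩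
      · exact h
      · exact absurd h one_ne_zero
    exact eqvGen_to_rtg (fun a b => fstep_symm) (Quot.eq.mp hquot)

end APCproof

namespace APCproof
set_option linter.unusedSectionVars false
open Relation
variable {A : Type*} [Fintype A] [DecidableEq A] {M : Type*} [AddCommMonoid M]

/-- Exchange step on multisets. -/
def MStep (Q : Finset (Multiset A × Multiset A)) (u v : Multiset A) : Prop :=
  ∃ p ∈ Q, ∃ c, (u = p.1 + c ∧ v = p.2 + c) ∨ (u = p.2 + c ∧ v = p.1 + c)

theorem redei_multiset {N : Type*} [AddCommMonoid N] (g : Multiset A →+ N) :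
    ∃ Q : Finset (Multiset A × Multiset A),
      (∀ p ∈ Q, g p.1 = g p.2) ∧
      ∀ u v, g u = g v → Relation.ReflTransGen (MStep Q) u v := by
  set e : Multiset A ≃+ (A →₀ ℕ) := Multiset.toFinsupp with he
  obtain ⟨P, hP1, hP2⟩ := redei_finsupp (f := g.comp e.symm.toAddMonoidHom)
  refine ⟨P.image (fun p => (e.symm p.1, e.symm p.2)), ?_, ?_⟩
  · intro p hp
    simp only [Finset.mem_image] at hp
    obtain ⟨q, hq, rfl⟩ := hp
    exact hP1 q hq
  · intro u v huv
    have : (g.comp e.symm.toAddMonoidHom) (e u) = (g.comp e.symm.toAddMonoidHom) (e v) := by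
      simpa using huv
    have hch := hP2 _ _ this
    have key : ∀ a b : (A →₀ ℕ), FStep P a b →
        MStep (P.image (fun p => (e.symm p.1, e.symm p.2))) (e.symm a) (e.symm b) := by
      intro a b hab
      obtain ⟨p, hp, c, h | h⟩ := hab
      · exact ⟨(e.symm p.1, e.symm p.2), Finset.mem_image_of_mem _ hp, e.symm c,
          Or.inl ⟨by rw [h.1, map_add], by rw [h.2, map_add]⟩⟩
      · exact ⟨(e.symm p.1, e.symm p.2), Finset.mem_image_of_mem _ hp, e.symm c,
          Or.inr ⟨by rw [h.1, map_add], by rw [h.2, map_add]⟩⟩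
    have := Relation.ReflTransGen.lift (fun a => e.symm a) key _ _ hch
    simpa [Function.onFun] using this

variable {M : Type*} [AddCommMonoid M]

/-- The multiset of letters of a word. -/
def mcount {n : ℕ} (x : Fin n → A) : Multiset A := Finset.univ.val.map x

/-- A local exchange step between words: they agree outside a window of size `≤ m₀`
on which their partial weights agree. -/
def LocalStep (w : A → M) (m₀ : ℕ) {n : ℕ} (x y : Fin n → A) : Prop :=
  ∃ S : Finset (Fin n), S.card ≤ m₀ ∧ (∀ i ∉ S, x i = y i) ∧
    ∑ i ∈ S, w (x i) = ∑ i ∈ S, w (y i)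

theorem localStep_symm {w : A → M} {m₀ n : ℕ} {x y : Fin n → A}
    (h : LocalStep w m₀ x y) : LocalStep w m₀ y x := by
  obtain ⟨S, h1, h2, h3⟩ := h
  exact ⟨S, h1, fun i hi => (h2 i hi).symm, h3.symm⟩

/-- partial weights agree on any larger window. -/
theorem sum_window_mono {w : A → M} {n : ℕ} {x y : Fin n → A} {S S' : Finset (Fin n)}
    (hSS : S ⊆ S') (hout : ∀ i ∉ S, x i = y i)
    (hsum : ∑ i ∈ S, w (x i) = ∑ i ∈ S, w (y i)) :
    ∑ i ∈ S', w (x i) = ∑ i ∈ S', w (y i) := by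
  rw [← Finset.sum_sdiff hSS, ← Finset.sum_sdiff (f := fun i => w (y i)) hSS, hsum]
  congr 1
  exact Finset.sum_congr rfl fun i hi => by
    rw [hout i (Finset.mem_sdiff.mp hi).2]

theorem phiWeight_eq_of_window {w : A → M} {n : ℕ} {x y : Fin n → A} {S : Finset (Fin n)}
    (hout : ∀ i ∉ S, x i = y i)
    (hsum : ∑ i ∈ S, w (x i) = ∑ i ∈ S, w (y i)) :
    phiWeight w x = phiWeight w y := by
  have := sum_window_mono (S' := Finset.univ) (Finset.subset_univ S) hout hsum
  simpa [phiWeight] using this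

theorem localStep_weight {w : A → M} {m₀ n : ℕ} {x y : Fin n → A}
    (h : LocalStep w m₀ x y) : phiWeight w x = phiWeight w y := by
  obtain ⟨S, _, h2, h3⟩ := h
  exact phiWeight_eq_of_window h2 h3

theorem mcount_card {n : ℕ} (x : Fin n → A) : (mcount x).card = n := by
  simp [mcount]

theorem sum_finset_map {n : ℕ} (x : Fin n → A) (f : A → M) (S : Finset (Fin n)) :
    ∑ i ∈ S, f (x i) = ((S.val.map x).map f).sum := by
  rw [Multiset.map_map]
  rfl

theorem mcount_weight {w : A → M} {n : ℕ} (x : Fin n → A) :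
    ((mcount x).map w).sum = phiWeight w x := by
  rw [phiWeight, sum_finset_map]
  rfl

theorem univ_val_split {n : ℕ} (S : Finset (Fin n)) :
    (Finset.univ : Finset (Fin n)).val = S.val + ((Finset.univ : Finset (Fin n)) \ S).val := by
  have h1 : (((Finset.univ : Finset (Fin n)) \ S)).val = (Finset.univ : Finset (Fin n)).val - S.val :=
    Finset.sdiff_val _ _
  have h2 : S.val ≤ (Finset.univ : Finset (Fin n)).val :=
    Finset.val_le_iff.mpr (Finset.subset_univ S)
  rw [h1, add_comm, tsub_add_cancel_of_le h2]

theorem mcount_split {n : ℕ} (x : Fin n → A) (S : Finset (Fin n)) :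
    mcount x = S.val.map x + ((Finset.univ : Finset (Fin n)) \ S).val.map x := by
  rw [mcount, univ_val_split S, Multiset.map_add]

/-- extract a window of positions realizing a submultiset of letters -/
theorem exists_window {n : ℕ} (s : Multiset A) : ∀ (T : Finset (Fin n)) (x : Fin n → A),
    s ≤ T.val.map x → ∃ S : Finset (Fin n), S ⊆ T ∧ S.val.map x = s := by
  induction s using Multiset.induction with
  | empty => exact fun T x _ => ⟨∅, Finset.empty_subset T, rfl⟩
  | cons a s ih =>
    intro T x hle
    have ha : a ∈ T.val.map x := Multiset.mem_of_le hle (Multiset.mem_cons_self a s)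
    obtain ⟨i, hiT, hxi⟩ := Multiset.mem_map.mp ha
    have hiT' : i ∈ T := hiT
    have hTval : T.val = i ::ₘ (T.erase i).val := by
      rw [Finset.erase_val]
      exact (Multiset.cons_erase hiT).symm
    have hle' : s ≤ (T.erase i).val.map x := by
      have : a ::ₘ s ≤ a ::ₘ (T.erase i).val.map x := by
        rw [← hxi] at hle ⊢
        rw [← Multiset.map_cons, ← hTval]
        exact hle
      exact (Multiset.cons_le_cons_iff a).mp this
    obtain ⟨S', hS'sub, hS'map⟩ := ih (T.erase i) x hle'
    have hiS' : i ∉ S' := fun h => (Finset.mem_erase.mp (hS'sub h)).1 rfl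
    refine ⟨insert i S', ?_, ?_⟩
    · intro j hj
      rcases Finset.mem_insert.mp hj with rfl | hj
      · exact hiT'
      · exact Finset.erase_subset _ _ (hS'sub hj)
    · rw [Finset.insert_val, Multiset.ndinsert_of_notMem (by simpa using hiS'),
        Multiset.map_cons, hxi, hS'map]

/-- fill a window with a prescribed multiset of letters -/
theorem exists_fill {n : ℕ} (t : Multiset A) : ∀ (S : Finset (Fin n)) (x : Fin n → A),
    S.card = t.card → ∃ y : Fin n → A, (∀ i ∉ S, y i = x i) ∧ S.val.map y = t := by
  induction t using Multiset.induction with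
  | empty =>
    intro S x hcard
    have : S = ∅ := Finset.card_eq_zero.mp (by simpa using hcard)
    subst this
    exact ⟨x, fun i _ => rfl, rfl⟩
  | cons a t ih =>
    intro S x hcard
    have hS : S.Nonempty := Finset.card_pos.mp (by rw [hcard]; simp [Nat.succ_pos])
    obtain ⟨i, hi⟩ := hS
    have hcard' : (S.erase i).card = t.card := by
      rw [Finset.card_erase_of_mem hi, hcard]
      simp
    obtain ⟨y', hy'1, hy'2⟩ := ih (S.erase i) x hcard'
    refine ⟨Function.update y' i a, ?_, ?_⟩
    · intro j hj
      rw [Function.update_of_ne (by rintro rfl; exact hj hi)]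
      exact hy'1 j (fun h => hj (Finset.erase_subset _ _ h))
    · have hSval : S.val = i ::ₘ (S.erase i).val := by
        rw [Finset.erase_val]
        exact (Multiset.cons_erase hi).symm
      rw [hSval, Multiset.map_cons, Function.update_self]
      congr 1
      rw [← hy'2]
      apply Multiset.map_congr rfl
      intro j hj
      have : j ∈ S.erase i := hj
      exact Function.update_of_ne (Finset.mem_erase.mp this).1 a y'

/-- The weight-and-length homomorphism on multisets. -/
def gweight (w : A → M) : Multiset A →+ ℕ × M where
  toFun s := (s.card, (s.map w).sum)
  map_zero' := by simp
  map_add' a b := by simp [Prod.ext_iff]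

/-- one multiset exchange step lifts to a local step on words -/
theorem lift_step {w : A → M} {Q : Finset (Multiset A × Multiset A)} {m₀ : ℕ}
    (hQ : ∀ p ∈ Q, gweight w p.1 = gweight w p.2)
    (hm : ∀ p ∈ Q, p.1.card ≤ m₀)
    {n : ℕ} (x : Fin n → A) (v : Multiset A) (hstep : MStep Q (mcount x) v) :
    ∃ y : Fin n → A, mcount y = v ∧ LocalStep w m₀ x y := by
  obtain ⟨p, hp, c, hc⟩ := hstep
  have hcard : p.1.card = p.2.card := congrArg Prod.fst (hQ p hp)
  have hwt : (p.1.map w).sum = (p.2.map w).sum := congrArg Prod.snd (hQ p hp)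
  -- uniform handling of orientation
  obtain ⟨s, t, hs, ht, hscard, hsum⟩ :
      ∃ s t : Multiset A, mcount x = s + c ∧ v = t + c ∧
        s.card = t.card ∧ (s.map w).sum = (t.map w).sum ∧ s.card ≤ m₀ := by
    rcases hc with ⟨h1, h2⟩ | ⟨h1, h2⟩
    · exact ⟨p.1, p.2, h1, h2, hcard, hwt, hm p hp⟩
    · exact ⟨p.2, p.1, h1, h2, hcard.symm, hwt.symm, hcard ▸ hm p hp⟩
  obtain ⟨hsum, hsm⟩ := hsum
  have hle : s ≤ (Finset.univ : Finset (Fin n)).val.map x := by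
    rw [show (Finset.univ : Finset (Fin n)).val.map x = mcount x from rfl, hs]
    exact Multiset.le_add_right s c
  obtain ⟨S, _, hSmap⟩ := exists_window s Finset.univ x hle
  have hScard : S.card = t.card := by
    rw [← hscard, ← hSmap, Multiset.card_map]
    rfl
  obtain ⟨y, hy1, hy2⟩ := exists_fill t S x hScard
  have hrest : ((Finset.univ : Finset (Fin n)) \ S).val.map x = c := by
    have h1 : mcount x = s + ((Finset.univ : Finset (Fin n)) \ S).val.map x := by
      rw [mcount_split x S, hSmap]
    rw [hs] at h1
    exact (add_left_cancel h1.symm)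
  refine ⟨y, ?_, ?_⟩
  · rw [mcount_split y S, hy2, ht]
    congr 1
    rw [← hrest]
    apply Multiset.map_congr rfl
    intro j hj
    exact hy1 j (Finset.mem_sdiff.mp hj).2
  · refine ⟨S, ?_, fun i hi => (hy1 i hi).symm, ?_⟩
    · rw [hScard, ← hscard]; exact hsm
    · rw [sum_finset_map, sum_finset_map, hSmap, hy2, hsum]

/-- chains of multiset steps lift to chains of local steps -/
theorem lift_chain {w : A → M} {Q : Finset (Multiset A × Multiset A)} {m₀ : ℕ}
    (hQ : ∀ p ∈ Q, gweight w p.1 = gweight w p.2)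
    (hm : ∀ p ∈ Q, p.1.card ≤ m₀)
    {n : ℕ} {u v : Multiset A} (h : Relation.ReflTransGen (MStep Q) u v) :
    ∀ x : Fin n → A, mcount x = u →
      ∃ y : Fin n → A, mcount y = v ∧ Relation.ReflTransGen (LocalStep w m₀) x y := by
  induction h with
  | refl => exact fun x hx => ⟨x, hx, .refl⟩
  | tail _ hstep ih =>
    intro x hx
    obtain ⟨y', hy'1, hy'2⟩ := ih x hx
    obtain ⟨y, hy1, hy2⟩ := lift_step hQ hm y' _ (hy'1 ▸ hstep)
    exact ⟨y, hy1, hy'2.tail hy2⟩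

theorem univ_val_map_perm {n : ℕ} (σ : Equiv.Perm (Fin n)) :
    (Finset.univ : Finset (Fin n)).val.map ⇑σ = (Finset.univ : Finset (Fin n)).val := by
  have : (Finset.univ : Finset (Fin n)).map σ.toEmbedding = Finset.univ :=
    Finset.map_univ_equiv σ
  calc (Finset.univ : Finset (Fin n)).val.map ⇑σ
      = ((Finset.univ : Finset (Fin n)).map σ.toEmbedding).val := by rw [Finset.map_val]; rfl
    _ = (Finset.univ : Finset (Fin n)).val := by rw [this]

theorem mcount_comp_perm {n : ℕ} (x : Fin n → A) (σ : Equiv.Perm (Fin n)) :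
    mcount (x ∘ ⇑σ) = mcount x := by
  rw [mcount, mcount, ← Multiset.map_map, univ_val_map_perm]

/-- words with the same letter multiset are connected by position swaps -/
theorem sort_chain {w : A → M} {m₀ : ℕ} (hm : 2 ≤ m₀) {n : ℕ} :
    ∀ (k : ℕ) (x y : Fin n → A), mcount x = mcount y →
      (Finset.univ.filter (fun i => x i ≠ y i)).card ≤ k →
      Relation.ReflTransGen (LocalStep w m₀) x y := by
  intro k
  induction k with
  | zero =>
    intro x y _ hcard
    have hemp : Finset.univ.filter (fun i => x i ≠ y i) = ∅ :=
      Finset.card_eq_zero.mp (Nat.le_zero.mp hcard)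
    have hxy : x = y := by
      funext i
      by_contra h
      have hmem : i ∈ Finset.univ.filter (fun i => x i ≠ y i) := by
        simp only [Finset.mem_filter, Finset.mem_univ, true_and]; exact h
      rw [hemp] at hmem
      exact absurd hmem (Finset.notMem_empty i)
    exact hxy ▸ .refl
  | succ k ih =>
    intro x y hcount hcard
    set D := Finset.univ.filter (fun i => x i ≠ y i) with hD
    by_cases hDe : D = ∅
    · have hxy : x = y := by
        funext i
        by_contra h
        have : i ∈ D := by simp [hD, h]
        rw [hDe] at this
        exact absurd this (Finset.notMem_empty i)
      exact hxy ▸ .refl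
    · obtain ⟨i, hi⟩ := Finset.nonempty_of_ne_empty hDe
      -- maps over D agree
      have hDmap : D.val.map x = D.val.map y := by
        have h1 : mcount x = D.val.map x + ((Finset.univ : Finset (Fin n)) \ D).val.map x :=
          mcount_split x D
        have h2 : mcount y = D.val.map y + ((Finset.univ : Finset (Fin n)) \ D).val.map y :=
          mcount_split y D
        have h3 : ((Finset.univ : Finset (Fin n)) \ D).val.map x
            = ((Finset.univ : Finset (Fin n)) \ D).val.map y := by
          apply Multiset.map_congr rfl
          intro j hj
          have hj' : (j : Fin n) ∈ (Finset.univ : Finset (Fin n)) \ D := hj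
          have : j ∉ D := (Finset.mem_sdiff.mp hj').2
          simpa [hD] using this
        rw [h1, h2, h3] at hcount
        exact add_right_cancel hcount
      have hyi : y i ∈ D.val.map y := Multiset.mem_map_of_mem y hi
      rw [← hDmap] at hyi
      obtain ⟨j, hjD, hxj⟩ := Multiset.mem_map.mp hyi
      have hjD' : (j : Fin n) ∈ D := hjD
      have hij : j ≠ i := by
        intro h
        subst h
        have : x j ≠ y j := by simpa [hD] using hjD'
        exact this hxj
      set x' := x ∘ ⇑(Equiv.swap i j) with hx'
      have hx'i : x' i = y i := by
        rw [hx']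
        simp [Equiv.swap_apply_left, hxj]
      have hx'j : x' j = x i := by
        rw [hx']
        simp [Equiv.swap_apply_right]
      have hx'k : ∀ k, k ≠ i → k ≠ j → x' k = x k := by
        intro k h1 h2
        rw [hx']
        simp [Equiv.swap_apply_of_ne_of_ne h1 h2]
      have hstep : LocalStep w m₀ x x' := by
        refine ⟨{i, j}, ?_, ?_, ?_⟩
        · exact le_trans (le_trans (Finset.card_insert_le _ _) (by simp)) hm
        · intro k hk
          simp only [Finset.mem_insert, Finset.mem_singleton, not_or] at hk
          exact (hx'k k hk.1 hk.2).symm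
        · rw [Finset.sum_pair (Ne.symm hij), Finset.sum_pair (Ne.symm hij)]
          rw [hx'i, hx'j, ← hxj]
          exact add_comm _ _
      have hcount' : mcount x' = mcount y := by
        rw [hx', mcount_comp_perm, hcount]
      have hD' : Finset.univ.filter (fun k => x' k ≠ y k) ⊆ D.erase i := by
        intro k hk
        have hk' : x' k ≠ y k := by simpa using hk
        rcases eq_or_ne k i with rfl | hki
        · exact absurd hx'i hk'
        · rcases eq_or_ne k j with rfl | hkj
          · exact Finset.mem_erase.mpr ⟨hki, hjD'⟩
          · refine Finset.mem_erase.mpr ⟨hki, ?_⟩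
            simp only [hD, Finset.mem_filter, Finset.mem_univ, true_and]
            rw [← hx'k k hki hkj]
            exact hk'
      have hcard' : (Finset.univ.filter (fun k => x' k ≠ y k)).card ≤ k := by
        calc (Finset.univ.filter (fun k => x' k ≠ y k)).card
            ≤ (D.erase i).card := Finset.card_le_card hD'
          _ = D.card - 1 := Finset.card_erase_of_mem hi
          _ ≤ k := by omega
      exact .head hstep (ih x' y hcount' hcard')

/-- Main connectivity theorem -/
theorem exists_connectivity (w : A → M) :
    ∃ m₀ : ℕ, 2 ≤ m₀ ∧ ∀ (n : ℕ) (x y : Fin n → A), phiWeight w x = phiWeight w y →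
      Relation.ReflTransGen (LocalStep w m₀) x y := by
  obtain ⟨Q, hQ1, hQ2⟩ := redei_multiset (gweight w)
  set m₀ := max 2 (Q.sup fun p => p.1.card) with hm₀
  refine ⟨m₀, le_max_left _ _, ?_⟩
  intro n x y hw
  have hg : gweight w (mcount x) = gweight w (mcount y) := by
    have : (gweight w (mcount x)).1 = (gweight w (mcount y)).1 := by
      show (mcount x).card = (mcount y).card
      rw [mcount_card, mcount_card]
    have h2 : (gweight w (mcount x)).2 = (gweight w (mcount y)).2 := by
      show ((mcount x).map w).sum = ((mcount y).map w).sum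
      rw [mcount_weight, mcount_weight, hw]
    exact Prod.ext this h2
  have hchain := hQ2 _ _ hg
  have hm : ∀ p ∈ Q, p.1.card ≤ m₀ := by
    intro p hp
    rw [hm₀]
    exact le_trans (Finset.le_sup (f := fun p : Multiset A × Multiset A => p.1.card) hp)
      (le_max_right 2 _)
  obtain ⟨y', hy'1, hy'2⟩ := lift_chain hQ1 hm hchain x rfl
  exact hy'2.trans (sort_chain (le_max_left _ _) (Finset.univ.filter (fun i => y' i ≠ y i)).card y' y (hy'1.trans rfl) le_rfl)


end APCproof

namespace APCproof
section cyc
variable {α : Type*} [DecidableEq α]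

/-- the 3-cycle a → b → c → a -/
def cyc (a b c : α) : Equiv.Perm α := Equiv.swap a c * Equiv.swap a b

variable {a b c d : α}

theorem cyc_apply_a (hab : a ≠ b) (hbc : b ≠ c) : cyc a b c a = b := by
  simp only [cyc, Equiv.Perm.mul_apply, Equiv.swap_apply_left]
  exact Equiv.swap_apply_of_ne_of_ne hab.symm hbc

theorem cyc_apply_b (hab : a ≠ b) : cyc a b c b = c := by
  simp only [cyc, Equiv.Perm.mul_apply]
  rw [Equiv.swap_apply_right, Equiv.swap_apply_left]

theorem cyc_apply_c (hac : a ≠ c) (hbc : b ≠ c) : cyc a b c c = a := by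
  simp only [cyc, Equiv.Perm.mul_apply]
  rw [Equiv.swap_apply_of_ne_of_ne hac.symm hbc.symm, Equiv.swap_apply_right]

theorem cyc_apply_other (hda : d ≠ a) (hdb : d ≠ b) (hdc : d ≠ c) : cyc a b c d = d := by
  simp only [cyc, Equiv.Perm.mul_apply]
  rw [Equiv.swap_apply_of_ne_of_ne hda hdb, Equiv.swap_apply_of_ne_of_ne hda hdc]

theorem cyc_inv : (cyc a b c)⁻¹ = cyc a c b := by
  rw [cyc, mul_inv_rev, Equiv.swap_inv, Equiv.swap_inv]
  rfl

theorem cyc_conj (σ : Equiv.Perm α) :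
    σ * cyc a b c * σ⁻¹ = cyc (σ a) (σ b) (σ c) := by
  rw [cyc, cyc, Equiv.swap_apply_apply, Equiv.swap_apply_apply]
  group

theorem cyc_rot (hab : a ≠ b) (hac : a ≠ c) (hbc : b ≠ c) :
    cyc a b c = cyc b c a := by
  ext x
  rcases eq_or_ne x a with rfl | hxa
  · rw [cyc_apply_a hab hbc, cyc_apply_c hab.symm hac.symm]
  rcases eq_or_ne x b with rfl | hxb
  · rw [cyc_apply_b hab, cyc_apply_a hbc hac.symm]
  rcases eq_or_ne x c with rfl | hxc
  · rw [cyc_apply_c hac hbc, cyc_apply_b hbc]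
  · rw [cyc_apply_other hxa hxb hxc, cyc_apply_other hxb hxc hxa]

end cyc
end APCproof

namespace APCproof
set_option linter.unusedSectionVars false
open Relation
variable {A : Type*} [Fintype A] [DecidableEq A] {M : Type*} [AddCommMonoid M]











/-- adjacency: a nontrivial local step -/
def Adj (w : A → M) (m₀ : ℕ) {n : ℕ} (x y : Fin n → A) : Prop :=
  x ≠ y ∧ LocalStep w m₀ x y

theorem adj_symm {w : A → M} {m₀ n : ℕ} {x y : Fin n → A} (h : Adj w m₀ x y) :
    Adj w m₀ y x := by
  obtain ⟨hne, S, h1, h2, h3⟩ := h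
  exact ⟨hne.symm, S, h1, fun i hi => (h2 i hi).symm, h3.symm⟩

theorem adj_weight {w : A → M} {m₀ n : ℕ} {x y : Fin n → A} (h : Adj w m₀ x y) :
    phiWeight w x = phiWeight w y := by
  obtain ⟨_, S, _, h2, h3⟩ := h
  exact phiWeight_eq_of_window h2 h3

/-- a triple of pairwise distinct words sharing a window of size ≤ m -/
def Triple (w : A → M) (m : ℕ) {n : ℕ} (a b c : Fin n → A) : Prop :=
  a ≠ b ∧ a ≠ c ∧ b ≠ c ∧ ∃ S : Finset (Fin n), S.card ≤ m ∧
    (∀ i ∉ S, a i = b i) ∧ (∀ i ∉ S, a i = c i) ∧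
    (∑ i ∈ S, w (a i)) = (∑ i ∈ S, w (b i)) ∧
    (∑ i ∈ S, w (a i)) = (∑ i ∈ S, w (c i))

def GenSet (w : A → M) (m n : ℕ) : Set (Equiv.Perm (Fin n → A)) :=
  {σ : Equiv.Perm (Fin n → A) |
    ∃ (S : Finset (Fin n)) (x y z : Fin n → A),
      S.card = m ∧ x ≠ y ∧ x ≠ z ∧ y ≠ z ∧
      (∀ i ∉ S, x i = y i) ∧ (∀ i ∉ S, x i = z i) ∧
      (∑ i ∈ S, w (x i)) = (∑ i ∈ S, w (y i)) ∧
      (∑ i ∈ S, w (x i)) = (∑ i ∈ S, w (z i)) ∧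
      σ = Equiv.swap x z * Equiv.swap x y}

theorem triple_mono {w : A → M} {m m' n : ℕ} (h : m ≤ m') {a b c : Fin n → A}
    (ht : Triple w m a b c) : Triple w m' a b c := by
  obtain ⟨h1, h2, h3, S, hS, h4⟩ := ht
  exact ⟨h1, h2, h3, S, hS.trans h, h4⟩

theorem triple_perm12 {w : A → M} {m n : ℕ} {a b c : Fin n → A}
    (ht : Triple w m a b c) : Triple w m b a c := by
  obtain ⟨h1, h2, h3, S, hS, o1, o2, s1, s2⟩ := ht
  exact ⟨h1.symm, h3, h2, S, hS, fun i hi => (o1 i hi).symm,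
    fun i hi => (o1 i hi).symm.trans (o2 i hi), s1.symm, s1.symm.trans s2⟩

theorem triple_weight12 {w : A → M} {m n : ℕ} {a b c : Fin n → A}
    (ht : Triple w m a b c) : phiWeight w a = phiWeight w b := by
  obtain ⟨_, _, _, S, _, o1, _, s1, _⟩ := ht
  exact phiWeight_eq_of_window o1 s1

theorem triple_weight13 {w : A → M} {m n : ℕ} {a b c : Fin n → A}
    (ht : Triple w m a b c) : phiWeight w a = phiWeight w c := by
  obtain ⟨_, _, _, S, _, _, o2, _, s2⟩ := ht
  exact phiWeight_eq_of_window o2 s2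

/-- a triple with a window of size ≤ m gives a generator (after padding) -/
theorem triple_gen {w : A → M} {m n : ℕ} (hmn : m ≤ n) {a b c : Fin n → A}
    (ht : Triple w m a b c) : cyc a b c ∈ GenSet w m n := by
  obtain ⟨h1, h2, h3, S, hS, o1, o2, s1, s2⟩ := ht
  obtain ⟨S', hSS', hS'⟩ := Finset.exists_superset_card_eq (n := m) hS (by simpa using hmn)
  refine ⟨S', a, b, c, hS', h1, h2, h3, ?_, ?_, ?_, ?_, rfl⟩
  · intro i hi; exact o1 i (fun h => hi (hSS' h))
  · intro i hi; exact o2 i (fun h => hi (hSS' h))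
  · exact sum_window_mono hSS' o1 s1
  · exact sum_window_mono hSS' o2 s2

theorem triple_mem {w : A → M} {m n : ℕ} (hmn : m ≤ n) {a b c : Fin n → A}
    (ht : Triple w m a b c) : cyc a b c ∈ Subgroup.closure (GenSet w m n) :=
  Subgroup.subset_closure (triple_gen hmn ht)

/-- invariance of a window sum under a transposition of two window positions -/
theorem sum_swap_window {w : A → M} {n : ℕ} (v : Fin n → A) {S' : Finset (Fin n)}
    {s j : Fin n} (hs : s ∈ S') (hj : j ∈ S') :
    ∑ i ∈ S', w ((v ∘ ⇑(Equiv.swap s j)) i) = ∑ i ∈ S', w (v i) := by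
  apply Finset.sum_equiv (Equiv.swap s j)
  · intro i
    rcases eq_or_ne i s with rfl | his
    · simp [Equiv.swap_apply_left, hs, hj]
    rcases eq_or_ne i j with rfl | hij
    · simp [Equiv.swap_apply_right, hs, hj]
    · rw [Equiv.swap_apply_of_ne_of_ne his hij]
  · intro i _
    rfl

/-- produce a third word making a generator triple with a given adjacent pair,
    modifying only one extra position `j` -/
theorem third_single {w : A → M} {m₀ n : ℕ} {u v : Fin n → A} (huv : u ≠ v)
    {S : Finset (Fin n)} (hcard : S.card ≤ m₀) (hout : ∀ i ∉ S, u i = v i)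
    (hsum : ∑ i ∈ S, w (u i) = ∑ i ∈ S, w (v i)) {j : Fin n} (hj : j ∉ S) :
    ∃ u', u' j ≠ v j ∧ (∀ k, k ∉ S → k ≠ j → u' k = v k) ∧ Triple w (m₀ + 1) u v u' := by
  have hS'card : (insert j S).card ≤ m₀ + 1 := by
    rw [Finset.card_insert_of_notMem hj]; omega
  have huj : u j = v j := hout j hj
  have hsum' : ∑ i ∈ insert j S, w (u i) = ∑ i ∈ insert j S, w (v i) := by
    rw [Finset.sum_insert hj, Finset.sum_insert hj, huj, hsum]
  by_cases hcase : ∃ s ∈ S, v s ≠ v j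
  · obtain ⟨s, hsS, hvs⟩ := hcase
    set u' := v ∘ ⇑(Equiv.swap s j) with hu'
    have hsj : s ≠ j := fun h => hj (h ▸ hsS)
    have h1 : u' j = v s := by rw [hu']; simp [Equiv.swap_apply_right]
    have h2 : ∀ k, k ∉ S → k ≠ j → u' k = v k := by
      intro k hkS hkj
      rw [hu']
      simp only [Function.comp_apply]
      rw [Equiv.swap_apply_of_ne_of_ne (by rintro rfl; exact hkS hsS) hkj]
    refine ⟨u', by rw [h1]; exact hvs, h2, huv, ?_, ?_, insert j S, hS'card, ?_, ?_, hsum', ?_⟩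
    · intro h
      have := congrFun h j
      rw [h1, huj] at this
      exact hvs this.symm
    · intro h
      have := congrFun h j
      rw [h1] at this
      exact hvs this.symm
    · intro i hi
      simp only [Finset.mem_insert, not_or] at hi
      exact hout i hi.2
    · intro i hi
      simp only [Finset.mem_insert, not_or] at hi
      exact (hout i hi.2).trans (h2 i hi.2 hi.1).symm
    · rw [hsum']
      exact (sum_swap_window v (Finset.mem_insert_of_mem hsS) (Finset.mem_insert_self j S)).symm
  · push_neg at hcase
    have hucase : ∃ s ∈ S, u s ≠ u j := by
      by_contra h
      push_neg at h
      apply huv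
      funext k
      by_cases hk : k ∈ S
      · rw [h k hk, huj, hcase k hk]
      · exact hout k hk
    obtain ⟨s, hsS, hus⟩ := hucase
    set u' := u ∘ ⇑(Equiv.swap s j) with hu'
    have hsj : s ≠ j := fun h => hj (h ▸ hsS)
    have h1 : u' j = u s := by rw [hu']; simp [Equiv.swap_apply_right]
    have h1' : u' j ≠ v j := by rw [h1, ← huj]; exact hus
    have h2 : ∀ k, k ∉ S → k ≠ j → u' k = v k := by
      intro k hkS hkj
      rw [hu']
      simp only [Function.comp_apply]
      rw [Equiv.swap_apply_of_ne_of_ne (by rintro rfl; exact hkS hsS) hkj]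
      exact hout k hkS
    refine ⟨u', h1', h2, huv, ?_, ?_, insert j S, hS'card, ?_, ?_, hsum', ?_⟩
    · intro h
      have := congrFun h j
      rw [h1] at this
      exact hus this.symm
    · intro h
      have := congrFun h j
      rw [h1] at this
      exact hus (this.symm.trans huj.symm)
    · intro i hi
      simp only [Finset.mem_insert, not_or] at hi
      exact hout i hi.2
    · intro i hi
      simp only [Finset.mem_insert, not_or] at hi
      exact ((h2 i hi.2 hi.1).trans (hout i hi.2).symm).symm
    · exact (sum_swap_window u (Finset.mem_insert_of_mem hsS) (Finset.mem_insert_self j S)).symm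




theorem exists_third {w : A → M} {m₀ n : ℕ} {u v : Fin n → A} (huv : u ≠ v)
    {S : Finset (Fin n)} (hcard : S.card ≤ m₀) (hout : ∀ i ∉ S, u i = v i)
    (hsum : ∑ i ∈ S, w (u i) = ∑ i ∈ S, w (v i)) (hn3 : m₀ + 3 ≤ n)
    (f1 f2 : Fin n → A) :
    ∃ u', u' ≠ f1 ∧ u' ≠ f2 ∧ Triple w (m₀ + 1) u v u' := by
  have hcompl : 3 ≤ Sᶜ.card := by
    rw [Finset.card_compl]
    have : Fintype.card (Fin n) = n := Fintype.card_fin n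
    omega
  obtain ⟨T, hTsub, hT3⟩ := Finset.exists_subset_card_eq hcompl
  obtain ⟨j1, j2, j3, h12, h13, h23, rfl⟩ := Finset.card_eq_three.mp hT3
  have hj1 : j1 ∉ S := by
    have := hTsub (by simp : j1 ∈ ({j1, j2, j3} : Finset (Fin n)))
    simpa using this
  have hj2 : j2 ∉ S := by
    have := hTsub (by simp : j2 ∈ ({j1, j2, j3} : Finset (Fin n)))
    simpa using this
  have hj3 : j3 ∉ S := by
    have := hTsub (by simp : j3 ∈ ({j1, j2, j3} : Finset (Fin n)))
    simpa using this
  obtain ⟨u1, hu1a, hu1b, hu1t⟩ := third_single huv hcard hout hsum hj1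
  obtain ⟨u2, hu2a, hu2b, hu2t⟩ := third_single huv hcard hout hsum hj2
  obtain ⟨u3, hu3a, hu3b, hu3t⟩ := third_single huv hcard hout hsum hj3
  have hd12 : u1 ≠ u2 := by
    intro h
    exact hu1a ((congrFun h j1).symm ▸ (hu2b j1 hj1 h12).symm ▸ rfl : u1 j1 = v j1)
  have hd13 : u1 ≠ u3 := by
    intro h
    exact hu1a ((congrFun h j1).symm ▸ (hu3b j1 hj1 h13).symm ▸ rfl : u1 j1 = v j1)
  have hd23 : u2 ≠ u3 := by
    intro h
    exact hu2a ((congrFun h j2).symm ▸ (hu3b j2 hj2 h23).symm ▸ rfl : u2 j2 = v j2)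
  by_cases c1 : u1 ≠ f1 ∧ u1 ≠ f2
  · exact ⟨u1, c1.1, c1.2, hu1t⟩
  by_cases c2 : u2 ≠ f1 ∧ u2 ≠ f2
  · exact ⟨u2, c2.1, c2.2, hu2t⟩
  · -- u1 and u2 each coincide with one of f1, f2, and they are distinct,
    -- so u3 differs from both
    push_neg at c1 c2
    have d1 : u1 = f1 ∨ u1 = f2 := by
      by_cases h : u1 = f1
      · exact Or.inl h
      · exact Or.inr (c1 h)
    have d2 : u2 = f1 ∨ u2 = f2 := by
      by_cases h : u2 = f1
      · exact Or.inl h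
      · exact Or.inr (c2 h)
    refine ⟨u3, ?_, ?_, hu3t⟩
    · intro h
      rcases d1 with h1 | h1
      · exact hd13 (h1.trans h.symm)
      · rcases d2 with h2 | h2
        · exact hd23 (h2.trans h.symm)
        · exact hd12 (h1.trans h2.symm)
    · intro h
      rcases d1 with h1 | h1
      · rcases d2 with h2 | h2
        · exact hd12 (h1.trans h2.symm)
        · exact hd23 (h2.trans h.symm)
      · exact hd13 (h1.trans h.symm)




theorem rtg_adj {w : A → M} {m₀ n : ℕ} {x y : Fin n → A}
    (h : Relation.ReflTransGen (LocalStep w m₀) x y) :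
    Relation.ReflTransGen (Adj w m₀) x y := by
  induction h with
  | refl => exact .refl
  | tail _ hstep ih =>
    rename_i b c _
    rcases eq_or_ne b c with rfl | hne
    · exact ih
    · exact ih.tail ⟨hne, hstep⟩

/-- moving the middle element of a 3-cycle along a chain (up to H-membership). -/
theorem move {w : A → M} {m₀ m n : ℕ} (hmn : m ≤ n) (hm : m₀ + 1 ≤ m) (hn3 : m₀ + 3 ≤ n)
    (x z : Fin n → A) {y : Fin n → A}
    (hchain : Relation.ReflTransGen (Adj w m₀) y x) :
    y ≠ x → y ≠ z → ∃ y', y' ≠ x ∧ y' ≠ z ∧ (Adj w m₀ y' x ∨ Adj w m₀ y' z) ∧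
      (cyc x y' z ∈ Subgroup.closure (GenSet w m n) →
        cyc x y z ∈ Subgroup.closure (GenSet w m n)) := by
  induction hchain using Relation.ReflTransGen.head_induction_on with
  | refl => exact fun h _ => absurd rfl h
  | @head y y₁ hstep hrest ih =>
    intro hyx hyz
    rcases eq_or_ne y₁ x with rfl | h1
    · exact ⟨y, hyx, hyz, Or.inl hstep, fun hh => hh⟩
    rcases eq_or_ne y₁ z with rfl | h2
    · exact ⟨y, hyx, hyz, Or.inr hstep, fun hh => hh⟩
    obtain ⟨y', hy'1, hy'2, hy'3, hy'4⟩ := ih h1 h2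
    obtain ⟨hne, S, hcard, hout, hsum⟩ := hstep
    obtain ⟨u', hu'1, hu'2, htriple⟩ := exists_third hne hcard hout hsum hn3 x z
    -- htriple : Triple w (m₀ + 1) y y₁ u'
    have hσ : cyc y₁ y u' ∈ Subgroup.closure (GenSet w m n) :=
      triple_mem hmn (triple_mono hm (triple_perm12 htriple))
    have hyy₁ : y ≠ y₁ := htriple.1
    have hyu' : y ≠ u' := htriple.2.1
    have hy₁u' : y₁ ≠ u' := htriple.2.2.1
    have hkey : cyc x y z = cyc y₁ y u' * cyc x y₁ z * (cyc y₁ y u')⁻¹ := by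
      rw [cyc_conj]
      have e1 : cyc y₁ y u' x = x :=
        cyc_apply_other (Ne.symm h1) (Ne.symm hyx) (fun h => hu'1 h.symm)
      have e2 : cyc y₁ y u' y₁ = y := cyc_apply_a hyy₁.symm hyu'
      have e3 : cyc y₁ y u' z = z :=
        cyc_apply_other (Ne.symm h2) (Ne.symm hyz) (fun h => hu'2 h.symm)
      rw [e1, e2, e3]
    refine ⟨y', hy'1, hy'2, hy'3, ?_⟩
    intro hmem
    rw [hkey]
    exact Subgroup.mul_mem _ (Subgroup.mul_mem _ hσ (hy'4 hmem)) (Subgroup.inv_mem _ hσ)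

/-- Every 3-cycle of three distinct words of the same weight lies in the closure
of the local generators. -/
theorem cyc3_mem {w : A → M} {m₀ m n : ℕ}
    (hconn : ∀ (x y : Fin n → A), phiWeight w x = phiWeight w y →
      Relation.ReflTransGen (LocalStep w m₀) x y)
    (hmn : m ≤ n) (hm : 2 * m₀ ≤ m) (hm1 : m₀ + 1 ≤ m) (hn3 : m₀ + 3 ≤ n)
    {x y z : Fin n → A} (hxy : x ≠ y) (hxz : x ≠ z) (hyz : y ≠ z)
    (hwxy : phiWeight w x = phiWeight w y) (hwxz : phiWeight w x = phiWeight w z) :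
    cyc x y z ∈ Subgroup.closure (GenSet w m n) := by
  -- triples from two adjacent edges sharing a vertex
  have base : ∀ a b c : Fin n → A, a ≠ b → a ≠ c → b ≠ c →
      Adj w m₀ a b → (Adj w m₀ c a ∨ Adj w m₀ c b) → Triple w m a b c := by
    intro a b c hab hac hbc he1 he2
    obtain ⟨_, S1, hS1card, hS1out, hS1sum⟩ := he1
    rcases he2 with he2 | he2
    · obtain ⟨_, S2, hS2card, hS2out, hS2sum⟩ := he2
      refine ⟨hab, hac, hbc, S1 ∪ S2, ?_, ?_, ?_, ?_, ?_⟩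
      · calc (S1 ∪ S2).card ≤ S1.card + S2.card := Finset.card_union_le _ _
          _ ≤ m := by omega
      · intro i hi
        exact hS1out i (fun h => hi (Finset.mem_union_left _ h))
      · intro i hi
        exact (hS2out i (fun h => hi (Finset.mem_union_right _ h))).symm
      · exact sum_window_mono Finset.subset_union_left hS1out hS1sum
      · exact (sum_window_mono Finset.subset_union_right hS2out hS2sum).symm
    · obtain ⟨_, S2, hS2card, hS2out, hS2sum⟩ := he2
      refine ⟨hab, hac, hbc, S1 ∪ S2, ?_, ?_, ?_, ?_, ?_⟩
      · calc (S1 ∪ S2).card ≤ S1.card + S2.card := Finset.card_union_le _ _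
          _ ≤ m := by omega
      · intro i hi
        exact hS1out i (fun h => hi (Finset.mem_union_left _ h))
      · intro i hi
        exact (hS1out i (fun h => hi (Finset.mem_union_left _ h))).trans
          (hS2out i (fun h => hi (Finset.mem_union_right _ h))).symm
      · exact sum_window_mono Finset.subset_union_left hS1out hS1sum
      · refine (sum_window_mono Finset.subset_union_left hS1out hS1sum).trans ?_
        exact (sum_window_mono Finset.subset_union_right hS2out hS2sum).symm
  -- move y along a chain to x
  have hchainy : Relation.ReflTransGen (Adj w m₀) y x := rtg_adj (hconn y x hwxy.symm)
  obtain ⟨y₂, hy₂x, hy₂z, hy₂adj, hy₂red⟩ := move hmn hm1 hn3 x z hchainy (Ne.symm hxy) hyz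
  apply hy₂red
  have hwy₂ : phiWeight w y₂ = phiWeight w x := by
    rcases hy₂adj with h | h
    · exact adj_weight h
    · exact (adj_weight h).trans hwxz.symm
  rcases hy₂adj with hadj | hadj
  · -- y₂ adjacent to x; now move z toward y₂ in the cycle (y₂ z x)
    have hrot : cyc x y₂ z = cyc y₂ z x := cyc_rot (Ne.symm hy₂x) hxz hy₂z
    rw [hrot]
    have hchainz : Relation.ReflTransGen (Adj w m₀) z y₂ :=
      rtg_adj (hconn z y₂ (hwxz.symm.trans hwy₂.symm))
    obtain ⟨z', hz'y₂, hz'x, hz'adj, hz'red⟩ := move hmn hm1 hn3 y₂ x hchainz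
      (Ne.symm hy₂z) (Ne.symm hxz)
    apply hz'red
    -- base case: triple {y₂, z', x} with edges y₂-x and z'-(y₂ or x)
    have htrip : Triple w m y₂ x z' :=
      base y₂ x z' hy₂x (Ne.symm hz'y₂) (Ne.symm hz'x) hadj hz'adj
    have hmem : cyc y₂ x z' ∈ Subgroup.closure (GenSet w m n) := triple_mem hmn htrip
    have hinv : (cyc y₂ x z')⁻¹ = cyc y₂ z' x := cyc_inv
    rw [← hinv]
    exact Subgroup.inv_mem _ hmem
  · -- y₂ adjacent to z; move x toward z in the cycle (z x y₂)
    have hrot : cyc x y₂ z = cyc z x y₂ := by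
      rw [cyc_rot (Ne.symm hy₂x) hxz hy₂z, cyc_rot hy₂z (Ne.symm hy₂x).symm hxz.symm]
    rw [hrot]
    have hchainx : Relation.ReflTransGen (Adj w m₀) x z := rtg_adj (hconn x z hwxz)
    obtain ⟨x', hx'z, hx'y₂, hx'adj, hx'red⟩ := move hmn hm1 hn3 z y₂ hchainx
      hxz (Ne.symm hy₂x)
    apply hx'red
    have htrip : Triple w m y₂ z x' :=
      base y₂ z x' hy₂z (Ne.symm hx'y₂) (Ne.symm hx'z) hadj
        (by rcases hx'adj with h | h
            · exact Or.inr h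
            · exact Or.inl h)
    have hmem : cyc y₂ z x' ∈ Subgroup.closure (GenSet w m n) := triple_mem hmn htrip
    have hrot2 : cyc y₂ z x' = cyc z x' y₂ :=
      cyc_rot hy₂z (Ne.symm hx'y₂) (Ne.symm hx'z)
    rw [← hrot2]
    exact hmem

end APCproof


namespace APCproof
set_option linter.unusedSectionVars false
open Relation
variable {A : Type*} [Fintype A] [DecidableEq A] {M : Type*} [AddCommMonoid M]

theorem swap_mul_swap_eq {α : Type*} [DecidableEq α] {a b u v : α}
    (hab : a ≠ b) (huv : u ≠ v) (hau : a ≠ u) (hav : a ≠ v) (hbu : b ≠ u) (hbv : b ≠ v) :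
    Equiv.swap a b * Equiv.swap u v = cyc a b u * cyc u v b := by
  ext x
  simp only [Equiv.Perm.mul_apply]
  rcases eq_or_ne x a with rfl | hxa
  · rw [Equiv.swap_apply_of_ne_of_ne hau hav, Equiv.swap_apply_left,
      cyc_apply_other hau hav hab, cyc_apply_a hab hbu]
  rcases eq_or_ne x b with rfl | hxb
  · rw [Equiv.swap_apply_of_ne_of_ne hbu hbv, Equiv.swap_apply_right,
      cyc_apply_c hbu.symm hbv.symm, cyc_apply_c hau hbu]
  rcases eq_or_ne x u with rfl | hxu
  · rw [Equiv.swap_apply_left, Equiv.swap_apply_of_ne_of_ne hav.symm hbv.symm,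
      cyc_apply_a huv hbv.symm, cyc_apply_other hav.symm hbv.symm huv.symm]
  rcases eq_or_ne x v with rfl | hxv
  · rw [Equiv.swap_apply_right, Equiv.swap_apply_of_ne_of_ne hau.symm hbu.symm,
      cyc_apply_b huv, cyc_apply_b hab]
  · rw [Equiv.swap_apply_of_ne_of_ne hxu hxv, Equiv.swap_apply_of_ne_of_ne hxa hxb,
      cyc_apply_other hxu hxv hxb, cyc_apply_other hxa hxb hxu]

section assembly

variable {w : A → M} {m n : ℕ}

/-- abbreviation for the hypothesis that all same-weight 3-cycles lie in the closure -/
def H3 (w : A → M) (m n : ℕ) : Prop :=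
  ∀ x y z : Fin n → A, x ≠ y → x ≠ z → y ≠ z →
    phiWeight w x = phiWeight w y → phiWeight w x = phiWeight w z →
    cyc x y z ∈ Subgroup.closure (GenSet w m n)

theorem pair_swap_mem (h3 : H3 w m n) {c : M} {a b u v : Fin n → A}
    (ha : phiWeight w a = c) (hb : phiWeight w b = c) (hu : phiWeight w u = c)
    (hv : phiWeight w v = c) (hab : a ≠ b) (huv : u ≠ v) :
    Equiv.swap a b * Equiv.swap u v ∈ Subgroup.closure (GenSet w m n) := by
  by_cases hau : a = u
  · subst hau
    by_cases hbv : b = v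
    · subst hbv
      rw [Equiv.swap_mul_self]
      exact Subgroup.one_mem _
    · have e : Equiv.swap a b * Equiv.swap a v = cyc a v b := rfl
      rw [e]
      exact h3 a v b huv hab (fun h => hbv h.symm) (ha.trans hv.symm) (ha.trans hb.symm)
  by_cases hav : a = v
  · subst hav
    by_cases hbu : b = u
    · subst hbu
      rw [Equiv.swap_comm b a, Equiv.swap_mul_self]
      exact Subgroup.one_mem _
    · rw [Equiv.swap_comm u a]
      have e : Equiv.swap a b * Equiv.swap a u = cyc a u b := rfl
      rw [e]
      exact h3 a u b (fun h => hau h) hab (fun h => hbu h.symm)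
        (ha.trans hu.symm) (ha.trans hb.symm)
  by_cases hbu : b = u
  · subst hbu
    rw [show Equiv.swap a b = Equiv.swap b a from Equiv.swap_comm a b]
    have e : Equiv.swap b a * Equiv.swap b v = cyc b v a := rfl
    rw [e]
    exact h3 b v a huv (Ne.symm hab) (fun h => hav h.symm)
      (hb.trans hv.symm) (hb.trans ha.symm)
  by_cases hbv : b = v
  · subst hbv
    rw [show Equiv.swap a b = Equiv.swap b a from Equiv.swap_comm a b,
      show Equiv.swap u b = Equiv.swap b u from Equiv.swap_comm u b]
    have e : Equiv.swap b a * Equiv.swap b u = cyc b u a := rfl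
    rw [e]
    exact h3 b u a (Ne.symm huv) (Ne.symm hab) (fun h => hau h.symm)
      (hb.trans hu.symm) (hb.trans ha.symm)
  · rw [swap_mul_swap_eq hab huv hau hav hbu hbv]
    exact Subgroup.mul_mem _
      (h3 a b u hab hau hbu (ha.trans hb.symm) (ha.trans hu.symm))
      (h3 u v b huv (fun h => hbu h.symm) (fun h => hbv h.symm)
        (hu.trans hv.symm) (hu.trans hb.symm))

theorem pairs_list_mem (h3 : H3 w m n) {c : M} :
    ∀ (k : ℕ) (l : List (Equiv.Perm {x : Fin n → A // phiWeight w x = c})),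
      l.length = k → (∀ τ ∈ l, Equiv.Perm.IsSwap τ) → Even k →
      (l.map (Equiv.Perm.ofSubtype :
          Equiv.Perm {x : Fin n → A // phiWeight w x = c} →*
          Equiv.Perm (Fin n → A))).prod ∈ Subgroup.closure (GenSet w m n) := by
  intro k
  induction k using Nat.strong_induction_on with
  | _ k ih =>
    intro l hlen hsw hev
    match l, hlen with
    | [], rfl => simpa using Subgroup.one_mem _
    | [τ], rfl => simp at hev
    | τ₁ :: τ₂ :: rest, rfl =>
      have hev' : Even rest.length := by
        rcases hev with ⟨r, hr⟩
        simp only [List.length_cons] at hr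
        exact ⟨r - 1, by omega⟩
      obtain ⟨p₁, q₁, hpq₁, hτ₁⟩ := hsw τ₁ (by simp)
      obtain ⟨p₂, q₂, hpq₂, hτ₂⟩ := hsw τ₂ (by simp)
      have hrest := ih rest.length (by simp) rest rfl
        (fun τ hτ => hsw τ (by simp [hτ])) hev'
      simp only [List.map_cons, List.prod_cons, ← mul_assoc]
      have h1 : Equiv.Perm.ofSubtype τ₁ = Equiv.swap (p₁ : Fin n → A) (q₁ : Fin n → A) := by
        rw [hτ₁]; exact Equiv.Perm.ofSubtype_swap_eq _ _
      have h2 : Equiv.Perm.ofSubtype τ₂ = Equiv.swap (p₂ : Fin n → A) (q₂ : Fin n → A) := by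
        rw [hτ₂]; exact Equiv.Perm.ofSubtype_swap_eq _ _
      refine Subgroup.mul_mem _ ?_ hrest
      rw [h1, h2]
      exact pair_swap_mem h3 p₁.2 q₁.2 p₂.2 q₂.2
        (fun h => hpq₁ (Subtype.ext h)) (fun h => hpq₂ (Subtype.ext h))

theorem classPerm_mem (h3 : H3 w m n) {c : M}
    (σ : Equiv.Perm {x : Fin n → A // phiWeight w x = c})
    (hsign : Equiv.Perm.sign σ = 1) :
    Equiv.Perm.ofSubtype σ ∈ Subgroup.closure (GenSet w m n) := by
  have hlist : ∃ l : List (Equiv.Perm {x : Fin n → A // phiWeight w x = c}),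
      (∀ τ ∈ l, Equiv.Perm.IsSwap τ) ∧ l.prod = σ := by
    refine Equiv.Perm.swap_induction_on
      (motive := fun τ => ∃ l : List (Equiv.Perm {x : Fin n → A // phiWeight w x = c}),
        (∀ τ' ∈ l, Equiv.Perm.IsSwap τ') ∧ l.prod = τ) σ ⟨[], by simp, by simp⟩ ?_
    intro f x y hxy ihf
    obtain ⟨l, hl1, hl2⟩ := ihf
    refine ⟨Equiv.swap x y :: l, ?_, by simp [hl2]⟩
    intro τ hτ
    rcases List.mem_cons.mp hτ with rfl | hτ
    · exact ⟨x, y, hxy, rfl⟩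
    · exact hl1 τ hτ
  obtain ⟨l, hl1, hl2⟩ := hlist
  have hsig : ((-1 : ℤˣ)) ^ l.length = 1 := by
    rw [← Equiv.Perm.sign_prod_list_swap hl1, hl2, hsign]
  have hev : Even l.length := by
    rcases Nat.even_or_odd l.length with h | h
    · exact h
    · rw [h.neg_one_pow] at hsig
      exact absurd hsig (by decide)
  rw [← hl2, map_list_prod]
  exact pairs_list_mem h3 l.length l rfl hl1 hev

end assembly
end APCproof


namespace APCproof
set_option linter.unusedSectionVars false
variable {A : Type*} [Fintype A] [DecidableEq A] {M : Type*} [AddCommMonoid M]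
variable {w : A → M} {m n : ℕ}

theorem alt_one : IsAltPhiConservative w (1 : Equiv.Perm (Fin n → A)) := by
  refine ⟨fun x => rfl, fun c h => ?_⟩
  have e : (1 : Equiv.Perm (Fin n → A)).subtypePerm (p := fun x => phiWeight w x = c) (fun x => (h x).symm) = 1 :=
    Equiv.Perm.subtypePerm_one _ _
  rw [e, map_one]

theorem alt_mul {f g : Equiv.Perm (Fin n → A)} (hf : IsAltPhiConservative w f)
    (hg : IsAltPhiConservative w g) : IsAltPhiConservative w (f * g) := by
  refine ⟨fun x => ?_, fun c h => ?_⟩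
  · rw [Equiv.Perm.mul_apply, hf.1, hg.1]
  · have hfc : ∀ x : Fin n → A, phiWeight w x = c ↔ phiWeight w (f x) = c := fun x => by
      rw [hf.1]
    have hgc : ∀ x : Fin n → A, phiWeight w x = c ↔ phiWeight w (g x) = c := fun x => by
      rw [hg.1]
    have e : (f * g).subtypePerm (p := fun x => phiWeight w x = c) (fun x => (h x).symm) =
        f.subtypePerm (p := fun x => phiWeight w x = c) (fun x => (hfc x).symm) * g.subtypePerm (p := fun x => phiWeight w x = c) (fun x => (hgc x).symm) :=
      (Equiv.Perm.subtypePerm_mul f g _ _).symm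
    rw [e, map_mul, hf.2 c hfc, hg.2 c hgc, mul_one]

theorem alt_inv {f : Equiv.Perm (Fin n → A)} (hf : IsAltPhiConservative w f) :
    IsAltPhiConservative w f⁻¹ := by
  refine ⟨fun x => ?_, fun c h => ?_⟩
  · rw [← hf.1 (f⁻¹ x), Equiv.Perm.inv_def, Equiv.apply_symm_apply]
  · have hfc : ∀ x : Fin n → A, phiWeight w x = c ↔ phiWeight w (f x) = c := fun x => by
      rw [hf.1]
    have e : f⁻¹.subtypePerm (p := fun x => phiWeight w x = c) (fun x => (h x).symm) =
        (f.subtypePerm (p := fun x => phiWeight w x = c) (fun x => (hfc x).symm))⁻¹ := Equiv.Perm.subtypePerm_inv f _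
    rw [e, map_inv, hf.2 c hfc, inv_one]

theorem gen_alt {σ : Equiv.Perm (Fin n → A)} (hσ : σ ∈ GenSet w m n) :
    IsAltPhiConservative w σ := by
  obtain ⟨S, x, y, z, hcard, hxy, hxz, hyz, o1, o2, s1, s2, rfl⟩ := hσ
  have hwxy : phiWeight w x = phiWeight w y := phiWeight_eq_of_window o1 s1
  have hwxz : phiWeight w x = phiWeight w z := phiWeight_eq_of_window o2 s2
  have hcyc : Equiv.swap x z * Equiv.swap x y = cyc x y z := rfl
  have happly : ∀ t, phiWeight w ((Equiv.swap x z * Equiv.swap x y) t) = phiWeight w t := by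
    intro t
    rw [hcyc]
    rcases eq_or_ne t x with rfl | htx
    · rw [cyc_apply_a hxy hyz]; exact hwxy.symm
    rcases eq_or_ne t y with rfl | hty
    · rw [cyc_apply_b hxy]; exact hwxz.symm.trans hwxy
    rcases eq_or_ne t z with rfl | htz
    · rw [cyc_apply_c hxz hyz]; exact hwxz
    · rw [cyc_apply_other htx hty htz]
  refine ⟨happly, ?_⟩
  intro c h
  by_cases hc : phiWeight w x = c
  · have hyc : phiWeight w y = c := hwxy.symm.trans hc
    have hzc : phiWeight w z = c := hwxz.symm.trans hc
    have hxy' : (⟨x, hc⟩ : {t : Fin n → A // phiWeight w t = c}) ≠ ⟨y, hyc⟩ :=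
      fun hh => hxy (congrArg Subtype.val hh)
    have hxz' : (⟨x, hc⟩ : {t : Fin n → A // phiWeight w t = c}) ≠ ⟨z, hzc⟩ :=
      fun hh => hxz (congrArg Subtype.val hh)
    have hyz' : (⟨y, hyc⟩ : {t : Fin n → A // phiWeight w t = c}) ≠ ⟨z, hzc⟩ :=
      fun hh => hyz (congrArg Subtype.val hh)
    have e : (Equiv.swap x z * Equiv.swap x y).subtypePerm (p := fun x => phiWeight w x = c) (fun x => (h x).symm)
        = cyc (⟨x, hc⟩ : {t : Fin n → A // phiWeight w t = c}) ⟨y, hyc⟩ ⟨z, hzc⟩ := by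
      refine Equiv.ext fun t => Subtype.ext ?_
      have h0 : (((Equiv.swap x z * Equiv.swap x y).subtypePerm (p := fun x => phiWeight w x = c) (fun x => (h x).symm)) t : Fin n → A)
          = cyc x y z (t : Fin n → A) := rfl
      rw [h0]
      rcases eq_or_ne (t : Fin n → A) x with htx | htx
      · have ht : t = ⟨x, hc⟩ := Subtype.ext htx
        rw [ht, cyc_apply_a hxy' hyz']
        exact cyc_apply_a hxy hyz
      rcases eq_or_ne (t : Fin n → A) y with hty | hty
      · have ht : t = ⟨y, hyc⟩ := Subtype.ext hty
        rw [ht, cyc_apply_b hxy']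
        exact cyc_apply_b hxy
      rcases eq_or_ne (t : Fin n → A) z with htz | htz
      · have ht : t = ⟨z, hzc⟩ := Subtype.ext htz
        rw [ht, cyc_apply_c hxz' hyz']
        exact cyc_apply_c hxz hyz
      · have h1 : t ≠ ⟨x, hc⟩ := fun hh => htx (congrArg Subtype.val hh)
        have h2 : t ≠ ⟨y, hyc⟩ := fun hh => hty (congrArg Subtype.val hh)
        have h3 : t ≠ ⟨z, hzc⟩ := fun hh => htz (congrArg Subtype.val hh)
        rw [cyc_apply_other h1 h2 h3]
        exact cyc_apply_other htx hty htz
    rw [e, cyc, map_mul, Equiv.Perm.sign_swap hxz', Equiv.Perm.sign_swap hxy']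
    decide
  · have e : (Equiv.swap x z * Equiv.swap x y).subtypePerm (p := fun x => phiWeight w x = c) (fun x => (h x).symm) = 1 := by
      refine Equiv.ext fun t => Subtype.ext ?_
      have h0 : (((Equiv.swap x z * Equiv.swap x y).subtypePerm (p := fun x => phiWeight w x = c) (fun x => (h x).symm)) t : Fin n → A)
          = cyc x y z (t : Fin n → A) := rfl
      rw [h0]
      have htx : (t : Fin n → A) ≠ x := fun hh => hc (hh ▸ t.2)
      have hty : (t : Fin n → A) ≠ y := fun hh => hc (hwxy.trans (hh ▸ t.2))
      have htz : (t : Fin n → A) ≠ z := fun hh => hc (hwxz.trans (hh ▸ t.2))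
      exact cyc_apply_other htx hty htz
    rw [e, map_one]

theorem reduce (h3 : H3 w m n) (F : Finset M) :
    ∀ g : Equiv.Perm (Fin n → A), IsAltPhiConservative w g →
      (∀ t : Fin n → A, phiWeight w t ∉ F → g t = t) →
      g ∈ Subgroup.closure (GenSet w m n) := by
  induction F using Finset.induction_on with
  | empty =>
    intro g halt hfix
    have hg1 : g = 1 := Equiv.ext fun t => hfix t (Finset.notMem_empty _)
    rw [hg1]
    exact Subgroup.one_mem _
  | @insert c F hcF ih =>
    intro g halt hfix
    have hclass : ∀ t : Fin n → A, phiWeight w t = c ↔ phiWeight w (g t) = c := fun t => by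
      rw [halt.1 t]
    set σc := g.subtypePerm (p := fun x => phiWeight w x = c) (fun x => (hclass x).symm) with hσc
    have hsig : Equiv.Perm.sign σc = 1 := halt.2 c hclass
    set gc := Equiv.Perm.ofSubtype σc with hgc
    have hgcH : gc ∈ Subgroup.closure (GenSet w m n) := classPerm_mem h3 σc hsig
    have hgc_mem : ∀ t : Fin n → A, phiWeight w t = c → gc t = g t := by
      intro t ht
      rw [hgc, Equiv.Perm.ofSubtype_apply_of_mem σc ht]
      rfl
    have hgc_nmem : ∀ t : Fin n → A, phiWeight w t ≠ c → gc t = t := by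
      intro t ht
      exact Equiv.Perm.ofSubtype_apply_of_not_mem σc ht
    have hgc_alt : IsAltPhiConservative w gc := by
      refine ⟨?_, ?_⟩
      · intro t
        by_cases ht : phiWeight w t = c
        · rw [hgc_mem t ht, halt.1]
        · rw [hgc_nmem t ht]
      · intro c' h'
        by_cases hcc : c' = c
        · subst hcc
          have e : gc.subtypePerm (p := fun x => phiWeight w x = _) (fun x => (h' x).symm) = σc := by
            refine Equiv.ext fun t => Subtype.ext ?_
            show gc (t : Fin n → A) = g (t : Fin n → A)
            exact hgc_mem _ t.2
          rw [e]
          exact hsig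
        · have e : gc.subtypePerm (p := fun x => phiWeight w x = _) (fun x => (h' x).symm) = 1 := by
            refine Equiv.ext fun t => Subtype.ext ?_
            show gc (t : Fin n → A) = (t : Fin n → A)
            exact hgc_nmem _ (fun hh => hcc (t.2.symm.trans hh))
          rw [e, map_one]
    have hg' : IsAltPhiConservative w (gc⁻¹ * g) := alt_mul (alt_inv hgc_alt) halt
    have hfix' : ∀ t : Fin n → A, phiWeight w t ∉ F → (gc⁻¹ * g) t = t := by
      intro t htF
      by_cases ht : phiWeight w t = c
      · have e := hgc_mem t ht
        show gc⁻¹ (g t) = t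
        rw [← e, Equiv.Perm.inv_def, Equiv.symm_apply_apply]
      · have h1 : g t = t := by
          apply hfix t
          intro hmem
          rcases Finset.mem_insert.mp hmem with h | h
          · exact ht h
          · exact htF h
        show gc⁻¹ (g t) = t
        rw [h1]
        have e := hgc_nmem t ht
        conv_lhs => rw [← e]
        rw [Equiv.Perm.inv_def, Equiv.symm_apply_apply]
    have hmain : g = gc * (gc⁻¹ * g) := by group
    rw [hmain]
    exact Subgroup.mul_mem _ hgcH (ih (gc⁻¹ * g) hg' hfix')

end APCproof

/-- **Local 3-cycles generate the alternating φ-conservative group.**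
Let `A` be a finite type, `M` an additive commutative monoid and `w : A → M`.  Then
there exists `m : ℕ` such that for all `n ≥ m`: a permutation of `Fin n → A` is
alternating φ-conservative if and only if it lies in the subgroup of
`Perm (Fin n → A)` generated by the 3-cycles `(x y z)` of triples of pairwise distinct
words that agree outside some `m`-element subset `S` of the coordinates and satisfy
`∑ i ∈ S, w (x i) = ∑ i ∈ S, w (y i) = ∑ i ∈ S, w (z i)`. -/
theorem altPhiConservative_generated_by_local_threeCycles
    {A : Type*} [Fintype A] [DecidableEq A] {M : Type*} [AddCommMonoid M]
    (w : A → M) :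
    ∃ m : ℕ, ∀ n : ℕ, m ≤ n → ∀ g : Equiv.Perm (Fin n → A),
      g ∈ Subgroup.closure
          {σ : Equiv.Perm (Fin n → A) |
            ∃ (S : Finset (Fin n)) (x y z : Fin n → A),
              S.card = m ∧ x ≠ y ∧ x ≠ z ∧ y ≠ z ∧
              (∀ i ∉ S, x i = y i) ∧ (∀ i ∉ S, x i = z i) ∧
              (∑ i ∈ S, w (x i)) = (∑ i ∈ S, w (y i)) ∧
              (∑ i ∈ S, w (x i)) = (∑ i ∈ S, w (z i)) ∧
              σ = Equiv.swap x z * Equiv.swap x y} ↔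
        IsAltPhiConservative w g := by
  classical
  obtain ⟨m₀, hm₀2, hconn⟩ := APCproof.exists_connectivity w
  refine ⟨2 * m₀ + 3, ?_⟩
  intro n hn g
  have h3 : APCproof.H3 w (2 * m₀ + 3) n := fun x y z hxy hxz hyz w1 w2 =>
    APCproof.cyc3_mem (hconn n) hn (by omega) (by omega) (by omega) hxy hxz hyz w1 w2
  show g ∈ Subgroup.closure (APCproof.GenSet w (2 * m₀ + 3) n) ↔ _
  constructor
  · intro hg
    exact Subgroup.closure_induction (fun σ hσ => APCproof.gen_alt hσ) APCproof.alt_one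
      (fun a b _ _ ha hb => APCproof.alt_mul ha hb) (fun a _ ha => APCproof.alt_inv ha) hg
  · intro hg
    exact APCproof.reduce h3 (Finset.image (phiWeight w) Finset.univ) g hg
      (fun t ht => absurd (Finset.mem_image_of_mem _ (Finset.mem_univ t)) ht)
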